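/- Let m ≥ 2 and n = 3m + 1. Then the graph K_1 ∨ mK_3 (the join of a single vertex with m disjoint triangles) satisfies q(K_1 ∨ mK_3) = (n + 4 + √((n-4)² + 16))/2, and moreover q(K_1 ∨ mK_3) < q(S_{n,2}). -/

import Mathlib

open SimpleGraph

/-- The signless Laplacian matrix `Q(G) = D(G) + A(G)` of a finite simple graph. -/
noncomputable def signlessLaplacian {V : Type*} [Fintype V] [DecidableEq V]
    (G : SimpleGraph V) : Matrix V V ℝ :=
  letI := Classical.decRel G.Adj
  Matrix.diagonal (fun v => (G.degree v : ℝ)) + G.adjMatrix ℝ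

/-- The `Q`-index of a graph: the largest eigenvalue of its signless Laplacian. -/
noncomputable def qIndex {V : Type*} [Fintype V] [DecidableEq V]
    (G : SimpleGraph V) : ℝ :=
  sSup (spectrum ℝ (signlessLaplacian G))

/-- `H` is contained in `G` as a (not necessarily induced) subgraph. -/
def ContainsCopy {α β : Type*} (H : SimpleGraph α) (G : SimpleGraph β) : Prop :=
  ∃ f : α ↪ β, ∀ ⦃a b⦄, H.Adj a b → G.Adj (f a) (f b)

/-- The friendship-type graph `F_n`: vertex `0` is dominating; the remaining
vertices are paired `(1,2), (3,4), …`; for even `n` the last vertex is a pendant. -/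
def friendshipGraph (n : ℕ) : SimpleGraph (Fin n) where
  Adj i j := i ≠ j ∧ (i.val = 0 ∨ j.val = 0 ∨ (i.val + 1) / 2 = (j.val + 1) / 2)
  symm := by
    constructor
    intro i j ⟨h1, h2⟩
    exact ⟨h1.symm, by tauto⟩
  loopless := by
    constructor
    intro i ⟨h1, _⟩
    exact h1 rfl

/-- The graph `S_{n,k} = K_k ∨ \overline{K}_{n-k}`: the first `k` vertices form a
complete graph joined to an independent set on the remaining `n - k` vertices. -/
def sGraph (n k : ℕ) : SimpleGraph (Fin n) where
  Adj i j := i ≠ j ∧ (i.val < k ∨ j.val < k)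
  symm := by
    constructor
    intro i j ⟨h1, h2⟩
    exact ⟨h1.symm, h2.symm⟩
  loopless := by
    constructor
    intro i ⟨h1, _⟩
    exact h1 rfl

/-- The number of edges of `G` with one endpoint in `X` and the other in `Y`
(counted as ordered pairs in `X × Y`; for disjoint `X`, `Y` this is `e(X,Y)`). -/
noncomputable def edgesBetween {V : Type*} [Fintype V] [DecidableEq V]
    (G : SimpleGraph V) (X Y : Finset V) : ℕ :=
  letI := Classical.decRel G.Adj
  ((X ×ˢ Y).filter fun p => G.Adj p.1 p.2).card

/-- The number of edges of `G` with both endpoints in `X`. -/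
noncomputable def edgesWithin {V : Type*} [Fintype V] [DecidableEq V]
    (G : SimpleGraph V) (X : Finset V) : ℕ :=
  edgesBetween G X X / 2

/-- The graph `K₁ ∨ m K₃` on `n = 3m + 1` vertices: vertex `0` is dominating, and
the remaining vertices are grouped into `m` triangles `(1,2,3), (4,5,6), …`. -/
def coneTriangles (n : ℕ) : SimpleGraph (Fin n) where
  Adj i j := i ≠ j ∧ (i.val = 0 ∨ j.val = 0 ∨ (i.val - 1) / 3 = (j.val - 1) / 3)
  symm := by
    constructor
    intro i j ⟨h1, h2⟩
    exact ⟨h1.symm, by tauto⟩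
  loopless := by
    constructor
    intro i ⟨h1, _⟩
    exact h1 rfl

open Matrix Module.End in
lemma perron_isGreatest {n : ℕ} (hn : 0 < n) (M : Matrix (Fin n) (Fin n) ℝ)
    (hsym : M.IsSymm) (hnn : ∀ i j, 0 ≤ M i j)
    (w : Fin n → ℝ) (hw : ∀ i, 0 < w i) (lam : ℝ)
    (hMw : M.mulVec w = lam • w) :
    IsGreatest (spectrum ℝ M) lam := by
  have hspec : spectrum ℝ (Matrix.toLin' M) = spectrum ℝ M := by
    have h : Matrix.toLin' M = Matrix.toLinAlgEquiv' M := rfl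
    rw [h]
    exact AlgEquiv.spectrum_eq _ _
  constructor
  · rw [← hspec, ← hasEigenvalue_iff_mem_spectrum]
    refine hasEigenvalue_of_hasEigenvector (x := w) ⟨mem_eigenspace_iff.mpr ?_, ?_⟩
    · simpa [Matrix.toLin'_apply] using hMw
    · have h0 := hw ⟨0, hn⟩
      intro h; rw [h] at h0; simp at h0
  · rintro μ hμ
    rw [← hspec, ← hasEigenvalue_iff_mem_spectrum] at hμ
    obtain ⟨u, hu⟩ := hμ.exists_hasEigenvector
    have hMu : M.mulVec u = μ • u := by
      have := hu.apply_eq_smul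
      simpa [Matrix.toLin'_apply] using this
    set u' : Fin n → ℝ := fun i => |u i| with hu'
    have hu'nn : ∀ i, 0 ≤ u' i := fun i => abs_nonneg _
    have key : ∀ i, |μ| * u' i ≤ M.mulVec u' i := by
      intro i
      have h1 : |μ * u i| = |M.mulVec u i| := by rw [hMu]; simp
      calc |μ| * u' i = |μ * u i| := (abs_mul μ (u i)).symm
        _ = |∑ j, M i j * u j| := by rw [h1]; rfl
        _ ≤ ∑ j, |M i j * u j| := Finset.abs_sum_le_sum_abs _ _
        _ = ∑ j, M i j * u' j := by
            refine Finset.sum_congr rfl fun j _ => ?_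
            rw [abs_mul, abs_of_nonneg (hnn i j)]
        _ = M.mulVec u' i := rfl
    have hdot : w ⬝ᵥ M.mulVec u' = lam * (w ⬝ᵥ u') := by
      rw [Matrix.dotProduct_mulVec, ← Matrix.mulVec_transpose, hsym.eq, hMw,
        smul_dotProduct]
      rfl
    have hpos : 0 < w ⬝ᵥ u' := by
      obtain ⟨i, hi⟩ : ∃ i, u i ≠ 0 := by
        by_contra h; push_neg at h; exact hu.2 (funext h)
      refine Finset.sum_pos' (fun j _ => mul_nonneg (hw j).le (hu'nn j))
        ⟨i, Finset.mem_univ i, mul_pos (hw i) (abs_pos.mpr hi)⟩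
    have hle : |μ| * (w ⬝ᵥ u') ≤ lam * (w ⬝ᵥ u') := by
      rw [← hdot]
      simp only [dotProduct, Finset.mul_sum]
      refine Finset.sum_le_sum fun i _ => ?_
      have h2 := key i
      have h3 := (hw i).le
      calc |μ| * (w i * u' i) = w i * (|μ| * u' i) := by ring
        _ ≤ w i * M.mulVec u' i := by nlinarith
    have : |μ| ≤ lam := le_of_mul_le_mul_right hle hpos
    exact (le_abs_self μ).trans this

instance coneTriangles.instDecidableRelAdj (n : ℕ) : DecidableRel (coneTriangles n).Adj := fun i j => by
  unfold coneTriangles; infer_instance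

instance sGraph.instDecidableRelAdj (n k : ℕ) : DecidableRel (sGraph n k).Adj := fun i j => by
  unfold sGraph; infer_instance

lemma coneTriangles_adj {n : ℕ} {i j : Fin n} : (coneTriangles n).Adj i j ↔
    i ≠ j ∧ (i.val = 0 ∨ j.val = 0 ∨ (i.val - 1) / 3 = (j.val - 1) / 3) := Iff.rfl

lemma sGraph_adj {n k : ℕ} {i j : Fin n} : (sGraph n k).Adj i j ↔
    i ≠ j ∧ (i.val < k ∨ j.val < k) := Iff.rfl

lemma signlessLaplacian_isSymm {V : Type*} [Fintype V] [DecidableEq V]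
    (G : SimpleGraph V) : (signlessLaplacian G).IsSymm := by
  classical
  simp [signlessLaplacian, Matrix.IsSymm, Matrix.transpose_add]

lemma signlessLaplacian_nonneg {V : Type*} [Fintype V] [DecidableEq V]
    (G : SimpleGraph V) (i j : V) : 0 ≤ signlessLaplacian G i j := by
  classical
  simp only [signlessLaplacian, Matrix.add_apply, Matrix.diagonal_apply,
    SimpleGraph.adjMatrix_apply]
  split_ifs <;> positivity

lemma signlessLaplacian_mulVec {V : Type*} [Fintype V] [DecidableEq V]
    (G : SimpleGraph V) [DecidableRel G.Adj] (v : V → ℝ) (i : V) :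
    (signlessLaplacian G).mulVec v i
      = (G.degree i : ℝ) * v i + ∑ j ∈ G.neighborFinset i, v j := by
  classical
  simp only [signlessLaplacian, Matrix.add_mulVec, Pi.add_apply, Matrix.mulVec_diagonal,
    SimpleGraph.adjMatrix_mulVec_apply]
  congr!


open Finset in
lemma cone_mulVec (m : ℕ) (hm : 2 ≤ m) (a : ℝ) (i : Fin (3*m+1)) :
    (signlessLaplacian (coneTriangles (3*m+1))).mulVec
      (fun j => if j.val = 0 then a else 1) i
      = if i.val = 0 then (3*(m:ℝ)) * a + 3*(m:ℝ) else a + 5 := by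
  have hiLt := i.isLt
  rw [signlessLaplacian_mulVec]
  by_cases hi : i.val = 0
  · -- dominating vertex
    have hnb : (coneTriangles (3*m+1)).neighborFinset i = Finset.univ.erase i := by
      ext j
      have hjLt := j.isLt
      simp only [SimpleGraph.mem_neighborFinset, coneTriangles_adj, Finset.mem_erase,
        Finset.mem_univ, and_true, ne_eq, Fin.ext_iff]
      omega
    have hsum : ∀ j : Fin (3*m+1), (if j.val = 0 then a else (1:ℝ))
        = 1 + (if j = i then a - 1 else 0) := by
      intro j
      by_cases h : j = i
      · subst h; simp [hi]
      · have : j.val ≠ 0 := fun hc => h (Fin.ext (by rw [hc, hi]))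
        simp [this, h]
    have huniv : ∑ j : Fin (3*m+1), (if j.val = 0 then a else (1:ℝ)) = a + 3*m := by
      rw [Finset.sum_congr rfl (fun j _ => hsum j), Finset.sum_add_distrib,
        Finset.sum_ite_eq' Finset.univ i (fun _ => a - 1)]
      simp [Finset.card_univ]
      ring
    rw [hnb, Finset.sum_erase_eq_sub (Finset.mem_univ i), huniv]
    have hdeg : (coneTriangles (3*m+1)).degree i = 3*m := by
      rw [SimpleGraph.degree, hnb, Finset.card_erase_of_mem (Finset.mem_univ i)]
      simp
    rw [hdeg, hi]
    simp only [if_pos rfl]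
    push_cast
    ring
  · -- triangle vertex
    obtain ⟨k, hk⟩ : ∃ k, k = (i.val - 1) / 3 := ⟨_, rfl⟩
    have hkb : 3*k + 3 < 3*m + 1 := by omega
    obtain ⟨z, hz⟩ : ∃ z : Fin (3*m+1), z.val = 0 := ⟨⟨0, by omega⟩, rfl⟩
    obtain ⟨t0, ht0⟩ : ∃ t : Fin (3*m+1), t.val = 3*k+1 := ⟨⟨3*k+1, by omega⟩, rfl⟩
    obtain ⟨t1, ht1⟩ : ∃ t : Fin (3*m+1), t.val = 3*k+2 := ⟨⟨3*k+2, by omega⟩, rfl⟩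
    obtain ⟨t2, ht2⟩ : ∃ t : Fin (3*m+1), t.val = 3*k+3 := ⟨⟨3*k+3, by omega⟩, rfl⟩
    set S : Finset (Fin (3*m+1)) := {z, t0, t1, t2} with hS
    have hnb : (coneTriangles (3*m+1)).neighborFinset i = S.erase i := by
      ext j
      have hjLt := j.isLt
      simp only [SimpleGraph.mem_neighborFinset, coneTriangles_adj, hS, Finset.mem_erase,
        Finset.mem_insert, Finset.mem_singleton, ne_eq, Fin.ext_iff, hz, ht0, ht1, ht2, hk]
      omega
    have hiS : i ∈ S := by
      simp only [hS, Finset.mem_insert, Finset.mem_singleton, Fin.ext_iff, hz, ht0, ht1, ht2,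
        hk]
      omega
    have hsumS : ∑ j ∈ S, (if j.val = 0 then a else (1:ℝ)) = a + 3 := by
      rw [hS]
      rw [Finset.sum_insert (by simp only [Finset.mem_insert, Finset.mem_singleton, Fin.ext_iff, hz, ht0, ht1, ht2]; omega),
        Finset.sum_insert (by simp only [Finset.mem_insert, Finset.mem_singleton, Fin.ext_iff, hz, ht0, ht1, ht2]; omega),
        Finset.sum_insert (by simp only [Finset.mem_insert, Finset.mem_singleton, Fin.ext_iff, hz, ht0, ht1, ht2]; omega),
        Finset.sum_singleton]
      simp [hz, ht0, ht1, ht2]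
      ring
    have hcardS : S.card = 4 := by
      rw [hS]
      rw [Finset.card_insert_of_notMem (by simp only [Finset.mem_insert, Finset.mem_singleton, Fin.ext_iff, hz, ht0, ht1, ht2]; omega),
        Finset.card_insert_of_notMem (by simp only [Finset.mem_insert, Finset.mem_singleton, Fin.ext_iff, hz, ht0, ht1, ht2]; omega),
        Finset.card_insert_of_notMem (by simp only [Finset.mem_insert, Finset.mem_singleton, Fin.ext_iff, hz, ht0, ht1, ht2]; omega),
        Finset.card_singleton]
    have hdeg : (coneTriangles (3*m+1)).degree i = 3 := by
      rw [SimpleGraph.degree, hnb, Finset.card_erase_of_mem hiS, hcardS]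
    rw [hnb, Finset.sum_erase_eq_sub hiS, hsumS, hdeg]
    simp [hi]
    ring

open Finset in
lemma sgraph_mulVec (n : ℕ) (hn : 7 ≤ n) (a : ℝ) (i : Fin n) :
    (signlessLaplacian (sGraph n 2)).mulVec
      (fun j => if j.val < 2 then a else 2) i
      = if i.val < 2 then (n:ℝ) * a + 2*((n:ℝ) - 2) else 2*a + 4 := by
  have hiLt := i.isLt
  rw [signlessLaplacian_mulVec]
  obtain ⟨z0, hz0⟩ : ∃ z : Fin n, z.val = 0 := ⟨⟨0, by omega⟩, rfl⟩
  obtain ⟨z1, hz1⟩ : ∃ z : Fin n, z.val = 1 := ⟨⟨1, by omega⟩, rfl⟩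
  have hne : z0 ≠ z1 := by simp only [ne_eq, Fin.ext_iff, hz0, hz1]; omega
  have huniv : ∑ j : Fin n, (if j.val < 2 then a else (2:ℝ)) = 2*a + 2*((n:ℝ) - 2) := by
    have hsum : ∀ j : Fin n, (if j.val < 2 then a else (2:ℝ))
        = 2 + (if j = z0 then a - 2 else 0) + (if j = z1 then a - 2 else 0) := by
      intro j
      by_cases h0 : j = z0
      · rw [h0, if_pos (show z0.val < 2 by omega), if_pos rfl, if_neg hne]
        ring
      · by_cases h1 : j = z1
        · rw [h1, if_pos (show z1.val < 2 by omega), if_pos rfl, if_neg (fun hc => hne hc.symm)]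
          ring
        · have : ¬ j.val < 2 := by
            have g0 : j.val ≠ 0 := fun hc => h0 (Fin.ext (by rw [hc, hz0]))
            have g1 : j.val ≠ 1 := fun hc => h1 (Fin.ext (by rw [hc, hz1]))
            omega
          simp [this, h0, h1]
    rw [Finset.sum_congr rfl (fun j _ => hsum j)]
    simp only [Finset.sum_add_distrib, Finset.sum_ite_eq' Finset.univ, Finset.mem_univ,
      if_true, Finset.sum_const, Finset.card_univ, Fintype.card_fin, nsmul_eq_mul]
    push_cast
    ring
  by_cases hi : i.val < 2
  · have hnb : (sGraph n 2).neighborFinset i = Finset.univ.erase i := by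
      ext j
      simp only [SimpleGraph.mem_neighborFinset, sGraph_adj, Finset.mem_erase,
        Finset.mem_univ, and_true, ne_eq, Fin.ext_iff]
      omega
    have hdeg : (sGraph n 2).degree i = n - 1 := by
      rw [SimpleGraph.degree, hnb, Finset.card_erase_of_mem (Finset.mem_univ i)]
      simp
    rw [hnb, Finset.sum_erase_eq_sub (Finset.mem_univ i), huniv, hdeg, if_pos hi]
    rw [if_pos hi]
    have : ((n - 1 : ℕ) : ℝ) = (n:ℝ) - 1 := by
      have : 1 ≤ n := by omega
      push_cast [this]; ring
    rw [this]
    ring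
  · have hnb : (sGraph n 2).neighborFinset i = {z0, z1} := by
      ext j
      have hjLt := j.isLt
      simp only [SimpleGraph.mem_neighborFinset, sGraph_adj, Finset.mem_insert,
        Finset.mem_singleton, ne_eq, Fin.ext_iff, hz0, hz1]
      omega
    have hdeg : (sGraph n 2).degree i = 2 := by
      rw [SimpleGraph.degree, hnb, Finset.card_insert_of_notMem (by
        simp only [Finset.mem_singleton]; exact hne), Finset.card_singleton]
    rw [hnb, hdeg, if_neg hi, if_neg hi]
    rw [Finset.sum_insert (by simp only [Finset.mem_singleton]; exact hne),
      Finset.sum_singleton]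
    rw [if_pos (show z0.val < 2 by omega), if_pos (show z1.val < 2 by omega)]
    push_cast
    ring

/-- For `m ≥ 2` and `n = 3m + 1`,
`q(K₁ ∨ m K₃) = (n + 4 + √((n-4)² + 16)) / 2` and `q(K₁ ∨ m K₃) < q(S_{n,2})`. -/
theorem stmt_14 (m n : ℕ) (hm : 2 ≤ m) (hn : n = 3 * m + 1) :
    qIndex (coneTriangles n)
        = ((n : ℝ) + 4 + Real.sqrt (((n : ℝ) - 4) ^ 2 + 16)) / 2 ∧
      qIndex (coneTriangles n) < qIndex (sGraph n 2) := by
  subst hn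
  obtain ⟨nR, hcast⟩ : ∃ x : ℝ, ((3*m+1 : ℕ) : ℝ) = x := ⟨_, rfl⟩
  have hn7 : (7:ℝ) ≤ nR := by
    rw [← hcast]
    push_cast
    have : (2:ℝ) ≤ m := by exact_mod_cast hm
    linarith
  -- the cone graph eigenvalue
  obtain ⟨s, hsdef⟩ : ∃ x : ℝ, Real.sqrt ((nR - 4)^2 + 16) = x := ⟨_, rfl⟩
  have hs0 : 0 ≤ s := hsdef ▸ Real.sqrt_nonneg _
  have hs2 : s^2 = (nR - 4)^2 + 16 := by
    rw [← hsdef]; exact Real.sq_sqrt (by positivity)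
  have hs5 : 5 ≤ s := by nlinarith
  obtain ⟨lam, hlamdef⟩ : ∃ x : ℝ, (nR + 4 + s)/2 = x := ⟨_, rfl⟩
  have hlam : lam^2 = (nR + 4)*lam - 4*(nR - 1) := by
    rw [← hlamdef]; nlinarith [hs2]
  have hlam8 : 8 ≤ lam := by rw [← hlamdef]; linarith
  -- the sGraph eigenvalue
  obtain ⟨t, htdef⟩ : ∃ x : ℝ, Real.sqrt ((nR + 2)^2 - 16) = x := ⟨_, rfl⟩
  have ht0 : 0 ≤ t := htdef ▸ Real.sqrt_nonneg _
  have ht2 : t^2 = (nR + 2)^2 - 16 := by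
    rw [← htdef]; exact Real.sq_sqrt (by nlinarith)
  obtain ⟨lam', hlam'def⟩ : ∃ x : ℝ, (nR + 2 + t)/2 = x := ⟨_, rfl⟩
  have hlam' : lam'^2 = (nR + 2)*lam' - 4 := by
    rw [← hlam'def]; nlinarith [ht2]
  have hlam'4 : 4 ≤ lam' := by rw [← hlam'def]; linarith
  -- Perron for the cone graph
  have h1 : IsGreatest (spectrum ℝ (signlessLaplacian (coneTriangles (3*m+1)))) lam := by
    refine perron_isGreatest (by omega) _ (signlessLaplacian_isSymm _)
      (signlessLaplacian_nonneg _) (fun j => if j.val = 0 then lam - 5 else 1)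
      (fun j => by split_ifs <;> norm_num <;> linarith) lam ?_
    funext i
    rw [cone_mulVec m hm (lam - 5) i]
    simp only [Pi.smul_apply, smul_eq_mul]
    have h3m : (3:ℝ)*(m:ℝ) = nR - 1 := by rw [← hcast]; push_cast; ring
    by_cases hi : i.val = 0
    · rw [if_pos hi, if_pos hi, h3m]
      nlinarith [hlam]
    · rw [if_neg hi, if_neg hi]
      ring
  -- Perron for the sGraph
  have h2 : IsGreatest (spectrum ℝ (signlessLaplacian (sGraph (3*m+1) 2))) lam' := by
    refine perron_isGreatest (by omega) _ (signlessLaplacian_isSymm _)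
      (signlessLaplacian_nonneg _) (fun j => if j.val < 2 then lam' - 2 else 2)
      (fun j => by split_ifs <;> norm_num <;> linarith) lam' ?_
    funext i
    rw [sgraph_mulVec (3*m+1) (by omega) (lam' - 2) i]
    simp only [Pi.smul_apply, smul_eq_mul, hcast]
    by_cases hi : i.val < 2
    · rw [if_pos hi, if_pos hi]
      nlinarith [hlam']
    · rw [if_neg hi, if_neg hi]
      ring
  have e1 : qIndex (coneTriangles (3*m+1)) = lam := h1.csSup_eq
  have e2 : qIndex (sGraph (3*m+1) 2) = lam' := h2.csSup_eq
  constructor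
  · rw [e1, hcast, hsdef, hlamdef]
  · rw [e1, e2]
    have hsq : s^2 ≤ nR^2 := by nlinarith only [hs2, hn7]
    have hsn : s ≤ nR := by nlinarith only [hsq, hs0, hn7]
    have hq : (s+2)^2 < t^2 := by nlinarith only [ht2, hs2, hsn, hn7]
    have hts : s + 2 < t := by nlinarith only [hq, ht0, hs0]
    rw [← hlamdef, ← hlam'def]
    linarith only [hts]
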